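/- Assume β_1 ≤ β_2 ≤ … ≤ β_n. Then the partition matroid interdiction problem min_{x ∈ I_X} ψ(x) admits an optimal solution x* ∈ I_X with the following monotone structure: for every k ∈ {1,…,k_f}, every k' ∈ {1,…,k_l}, and every pair of elements i', i'' ∈ F_k ∩ L_{k'} with i' < i'', it holds that x*_{i'} ≤ x*_{i''}. -/

import Mathlib

/-- The leader's objective `ψ(x)`: the follower's optimal value, i.e. the maximum of
`βᵀy` over binary `y ≤ 1 - x` satisfying `∑_{i ∈ F_k} y_i ≤ f_k` for all `k`. -/
noncomputable def psi (n kf : ℕ) (F : Fin kf → Finset ℕ) (f : Fin kf → ℕ)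
    (β : ℕ → ℝ) (x : ℕ → ℝ) : ℝ :=
  sSup {v : ℝ | ∃ y : ℕ → ℝ,
    (∀ i, y i = 0 ∨ y i = 1) ∧
    (∀ i, y i ≤ 1 - x i) ∧
    (∀ k : Fin kf, ∑ i ∈ F k, y i ≤ (f k : ℝ)) ∧
    v = ∑ i ∈ Finset.Icc 1 n, β i * y i}

/-- The leader's feasible set `I_X`: binary `x` with `∑_{i ∈ L_k} x_i ≤ l_k`. -/
def leaderFeas (kl : ℕ) (L : Fin kl → Finset ℕ) (l : Fin kl → ℕ) (x : ℕ → ℝ) : Prop :=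
  (∀ i, x i = 0 ∨ x i = 1) ∧ ∀ k : Fin kl, ∑ i ∈ L k, x i ≤ (l k : ℝ)

open Finset

/-- auxiliary: the set whose sup defines psi -/
def psiSet (n kf : ℕ) (F : Fin kf → Finset ℕ) (f : Fin kf → ℕ)
    (β : ℕ → ℝ) (x : ℕ → ℝ) : Set ℝ :=
  {v : ℝ | ∃ y : ℕ → ℝ,
    (∀ i, y i = 0 ∨ y i = 1) ∧
    (∀ i, y i ≤ 1 - x i) ∧
    (∀ k : Fin kf, ∑ i ∈ F k, y i ≤ (f k : ℝ)) ∧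
    v = ∑ i ∈ Finset.Icc 1 n, β i * y i}

lemma sum_swap_le {a b : ℕ} (T : Finset ℕ) (hab : a ≠ b) (ha : a ∈ T) (hb : b ∈ T)
    (g g' : ℕ → ℝ) (hoff : ∀ i ∈ T, i ≠ a → i ≠ b → g i = g' i)
    (hsum : g a + g b ≤ g' a + g' b) : ∑ i ∈ T, g i ≤ ∑ i ∈ T, g' i := by
  have hbe : b ∈ T.erase a := Finset.mem_erase.2 ⟨hab.symm, hb⟩
  rw [← Finset.sum_erase_add T g ha, ← Finset.sum_erase_add _ g hbe,
      ← Finset.sum_erase_add T g' ha, ← Finset.sum_erase_add _ g' hbe]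
  have hcong : ∑ i ∈ (T.erase a).erase b, g i = ∑ i ∈ (T.erase a).erase b, g' i := by
    refine Finset.sum_congr rfl fun i hi => ?_
    have h1 := Finset.mem_erase.1 hi
    have h2 := Finset.mem_erase.1 h1.2
    exact hoff i h2.2 h2.1 h1.1
  linarith

lemma sum_swap_eq {a b : ℕ} (T : Finset ℕ) (hab : a ≠ b) (ha : a ∈ T) (hb : b ∈ T)
    (g g' : ℕ → ℝ) (hoff : ∀ i ∈ T, i ≠ a → i ≠ b → g i = g' i)
    (hsum : g a + g b = g' a + g' b) : ∑ i ∈ T, g i = ∑ i ∈ T, g' i :=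
  le_antisymm (sum_swap_le T hab ha hb g g' hoff hsum.le)
    (sum_swap_le T hab ha hb g' g (fun i hi h1 h2 => (hoff i hi h1 h2).symm) hsum.ge)

lemma zero_mem_psiSet (n kf : ℕ) (F : Fin kf → Finset ℕ) (f : Fin kf → ℕ)
    (β : ℕ → ℝ) (x : ℕ → ℝ) (hxle : ∀ i, x i ≤ 1) :
    (0:ℝ) ∈ psiSet n kf F f β x :=
  ⟨fun _ => 0, fun _ => Or.inl rfl, fun i => by simp only []; linarith [hxle i],
   fun k => by simp, by simp⟩

lemma psiSet_bdd (n kf : ℕ) (F : Fin kf → Finset ℕ) (f : Fin kf → ℕ)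
    (β : ℕ → ℝ) (x : ℕ → ℝ) (hβnn : ∀ i, 0 ≤ β i) :
    BddAbove (psiSet n kf F f β x) := by
  refine ⟨∑ i ∈ Finset.Icc 1 n, β i, ?_⟩
  rintro v ⟨y, h01, hle, hF, hv⟩
  rw [hv]
  apply Finset.sum_le_sum
  intro i _
  have hy1 : y i ≤ 1 := by rcases h01 i with h | h <;> simp [h]
  have := mul_le_mul_of_nonneg_left hy1 (hβnn i)
  linarith

lemma psiSet_agree_subset (n kf : ℕ) (F : Fin kf → Finset ℕ) (f : Fin kf → ℕ)
    (β : ℕ → ℝ) (hFsub : ∀ k, F k ⊆ Finset.Icc 1 n)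
    (x x' : ℕ → ℝ) (hx'le : ∀ i, x' i ≤ 1)
    (hagree : ∀ i ∈ Finset.Icc 1 n, x i = x' i) :
    psiSet n kf F f β x ⊆ psiSet n kf F f β x' := by
  rintro v ⟨y, h01, hle, hF, hv⟩
  refine ⟨fun i => if i ∈ Finset.Icc 1 n then y i else 0, ?_, ?_, ?_, ?_⟩
  · intro i
    by_cases h : i ∈ Finset.Icc 1 n
    · simpa [h] using h01 i
    · simp [h]
  · intro i
    by_cases h : i ∈ Finset.Icc 1 n
    · have := hle i
      rw [hagree i h] at this
      simpa [h] using this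
    · simp only [h, if_false]
      linarith [hx'le i]
  · intro k
    have : ∑ i ∈ F k, (if i ∈ Finset.Icc 1 n then y i else 0) = ∑ i ∈ F k, y i :=
      Finset.sum_congr rfl fun i hi => by simp [hFsub k hi]
    rw [this]; exact hF k
  · rw [hv]
    exact Finset.sum_congr rfl fun i hi => by simp [hi]

lemma psi_eq_of_agree (n kf : ℕ) (F : Fin kf → Finset ℕ) (f : Fin kf → ℕ)
    (β : ℕ → ℝ) (hFsub : ∀ k, F k ⊆ Finset.Icc 1 n)
    (x x' : ℕ → ℝ) (hxle : ∀ i, x i ≤ 1) (hx'le : ∀ i, x' i ≤ 1)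
    (hagree : ∀ i ∈ Finset.Icc 1 n, x i = x' i) :
    psi n kf F f β x = psi n kf F f β x' := by
  have h1 := psiSet_agree_subset n kf F f β hFsub x x' hx'le hagree
  have h2 := psiSet_agree_subset n kf F f β hFsub x' x hxle
    (fun i hi => (hagree i hi).symm)
  show sSup (psiSet n kf F f β x) = sSup (psiSet n kf F f β x')
  rw [le_antisymm h1 h2]

/-- indicator of a finite set -/
def chi (S : Finset ℕ) : ℕ → ℝ := fun i => if i ∈ S then 1 else 0

lemma chi01 (S : Finset ℕ) (i : ℕ) : chi S i = 0 ∨ chi S i = 1 := by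
  unfold chi; by_cases h : i ∈ S <;> simp [h]

lemma chile (S : Finset ℕ) (i : ℕ) : chi S i ≤ 1 := by
  unfold chi; by_cases h : i ∈ S <;> simp [h]

lemma chi_nonneg (S : Finset ℕ) (i : ℕ) : 0 ≤ chi S i := by
  unfold chi; by_cases h : i ∈ S <;> simp [h]

lemma chi_swap_mem {S : Finset ℕ} {a b i : ℕ} (hab : a ≠ b) (hia : i ≠ a) (hib : i ≠ b) :
    chi (insert b (S.erase a)) i = chi S i := by
  unfold chi
  simp [Finset.mem_insert, Finset.mem_erase, hia, hib]

lemma psi_exchange (n kf : ℕ) (F : Fin kf → Finset ℕ) (f : Fin kf → ℕ) (β : ℕ → ℝ)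
    (hβnn : ∀ i, 0 ≤ β i)
    (hFdisj : ∀ k k', k ≠ k' → Disjoint (F k) (F k'))
    (S : Finset ℕ) (a b : ℕ)
    (haI : a ∈ Finset.Icc 1 n) (hbI : b ∈ Finset.Icc 1 n) (hab : a ≠ b)
    (hβab : β a ≤ β b) (k : Fin kf) (haF : a ∈ F k) (hbF : b ∈ F k)
    (haS : a ∈ S) (hbS : b ∉ S) :
    psi n kf F f β (chi (insert b (S.erase a))) ≤ psi n kf F f β (chi S) := by
  classical
  set S' := insert b (S.erase a) with hS'
  have hbS' : b ∈ S' := Finset.mem_insert_self _ _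
  have haS' : a ∉ S' := by
    simp [hS', Finset.mem_insert, Finset.mem_erase, hab]
  show sSup (psiSet n kf F f β (chi S')) ≤ sSup (psiSet n kf F f β (chi S))
  apply csSup_le ⟨0, zero_mem_psiSet n kf F f β _ (chile _)⟩
  rintro v ⟨y', h01, hle, hFc, hv⟩
  have hy'b : y' b = 0 := by
    have h1 := hle b
    rw [show chi S' b = 1 by simp [chi, hbS']] at h1
    rcases h01 b with h | h
    · exact h
    · linarith
  have hy'a0 : 0 ≤ y' a := by rcases h01 a with h | h <;> simp [h]
  have hy'a1 : y' a ≤ 1 := by rcases h01 a with h | h <;> simp [h]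
  set y : ℕ → ℝ := fun i => if i = a then 0 else if i = b then y' a else y' i with hy
  have hya : y a = 0 := by simp [hy]
  have hyb : y b = y' a := by simp [hy, Ne.symm hab]
  have hyoff : ∀ i, i ≠ a → i ≠ b → y i = y' i := fun i h1 h2 => by simp [hy, h1, h2]
  have hvS : (∑ i ∈ Finset.Icc 1 n, β i * y i) ∈ psiSet n kf F f β (chi S) := by
    refine ⟨y, ?_, ?_, ?_, rfl⟩
    · intro i
      rcases eq_or_ne i a with rfl | h1
      · exact Or.inl hya
      rcases eq_or_ne i b with rfl | h2
      · rw [hyb]; exact h01 a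
      · rw [hyoff i h1 h2]; exact h01 i
    · intro i
      rcases eq_or_ne i a with rfl | h1
      · rw [hya, show chi S i = 1 by simp [chi, haS]]; norm_num
      rcases eq_or_ne i b with rfl | h2
      · rw [hyb, show chi S i = 0 by simp [chi, hbS]]; linarith
      · rw [hyoff i h1 h2, ← chi_swap_mem (S := S) hab h1 h2]; exact hle i
    · intro k0
      rcases eq_or_ne k0 k with rfl | hk
      · rw [sum_swap_eq (F k0) hab haF hbF y y'
          (fun i _ h1 h2 => hyoff i h1 h2) (by rw [hya, hyb, hy'b]; ring)]
        exact hFc k0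
      · have hdis := hFdisj k0 k hk
        rw [Finset.sum_congr rfl (fun i hi => hyoff i
          (fun h => (Finset.disjoint_left.1 hdis hi) (h ▸ haF))
          (fun h => (Finset.disjoint_left.1 hdis hi) (h ▸ hbF)))]
        exact hFc k0
  refine le_trans ?_ (le_csSup (psiSet_bdd n kf F f β _ hβnn) hvS)
  rw [hv]
  apply sum_swap_le (Finset.Icc 1 n) hab haI hbI (fun i => β i * y' i) (fun i => β i * y i)
    (fun i _ h1 h2 => by rw [hyoff i h1 h2])
  rw [hya, hyb, hy'b]
  have := mul_le_mul_of_nonneg_right hβab hy'a0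
  linarith

lemma leaderFeas_exchange (kl : ℕ) (L : Fin kl → Finset ℕ) (l : Fin kl → ℕ)
    (hLdisj : ∀ k k', k ≠ k' → Disjoint (L k) (L k'))
    (S : Finset ℕ) (a b : ℕ) (hab : a ≠ b) (k' : Fin kl)
    (haL : a ∈ L k') (hbL : b ∈ L k') (haS : a ∈ S) (hbS : b ∉ S)
    (hfeas : leaderFeas kl L l (chi S)) :
    leaderFeas kl L l (chi (insert b (S.erase a))) := by
  classical
  set S' := insert b (S.erase a) with hS'
  have hbS' : b ∈ S' := Finset.mem_insert_self _ _
  have haS' : a ∉ S' := by simp [hS', Finset.mem_insert, Finset.mem_erase, hab]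
  refine ⟨chi01 _, fun kk => ?_⟩
  rcases eq_or_ne kk k' with rfl | hk
  · rw [sum_swap_eq (L kk) hab haL hbL (chi S') (chi S)
      (fun i _ h1 h2 => chi_swap_mem hab h1 h2)
      (by simp [chi, haS', hbS', haS, hbS])]
    exact hfeas.2 kk
  · have hdis := hLdisj kk k' hk
    rw [Finset.sum_congr rfl (fun i hi => chi_swap_mem hab
      (fun h => (Finset.disjoint_left.1 hdis hi) (by rw [h]; exact haL))
      (fun h => (Finset.disjoint_left.1 hdis hi) (by rw [h]; exact hbL)))]
    exact hfeas.2 kk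

/-- if `β_1 ≤ ⋯ ≤ β_n`, the PMI problem admits an optimal solution
`x*` with the monotone structure: for all `k, k'` and `i' < i''` both lying in
`F_k ∩ L_{k'}`, one has `x*_{i'} ≤ x*_{i''}`. -/
theorem exists_monotone_optimal_solution (n kl kf : ℕ) (β : ℕ → ℝ)
    (hβnn : ∀ i, 0 ≤ β i)
    (hβmono : ∀ i j : ℕ, i ≤ j → j ≤ n → β i ≤ β j)
    (L : Fin kl → Finset ℕ) (l : Fin kl → ℕ)
    (hLsub : ∀ k, L k ⊆ Finset.Icc 1 n)
    (hLdisj : ∀ k k', k ≠ k' → Disjoint (L k) (L k'))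
    (hLcover : ∀ i ∈ Finset.Icc 1 n, ∃ k, i ∈ L k)
    (F : Fin kf → Finset ℕ) (f : Fin kf → ℕ)
    (hFsub : ∀ k, F k ⊆ Finset.Icc 1 n)
    (hFdisj : ∀ k k', k ≠ k' → Disjoint (F k) (F k'))
    (hFcover : ∀ i ∈ Finset.Icc 1 n, ∃ k, i ∈ F k) :
    ∃ xstar : ℕ → ℝ, leaderFeas kl L l xstar ∧
      psi n kf F f β xstar
        = sInf {v : ℝ | ∃ x : ℕ → ℝ, leaderFeas kl L l x ∧ v = psi n kf F f β x} ∧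
      ∀ (k : Fin kf) (k' : Fin kl) (i' i'' : ℕ),
        i' ∈ F k → i' ∈ L k' → i'' ∈ F k → i'' ∈ L k' → i' < i'' →
        xstar i' ≤ xstar i'' := by
  classical
  set g : Finset ℕ → ℝ := fun S => psi n kf F f β (chi S) with hg
  set A : Finset (Finset ℕ) :=
    (Finset.Icc 1 n).powerset.filter (fun S => leaderFeas kl L l (chi S)) with hA
  have hAmem : ∀ S, S ∈ A ↔ S ⊆ Finset.Icc 1 n ∧ leaderFeas kl L l (chi S) := by
    intro S; simp [hA, Finset.mem_filter, Finset.mem_powerset]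
  have hemptyA : ∅ ∈ A := by
    rw [hAmem]
    exact ⟨Finset.empty_subset _, fun i => Or.inl (by simp [chi]),
      fun k => by simp [chi]⟩
  have hVne : (A.image g).Nonempty := ⟨_, Finset.mem_image_of_mem _ hemptyA⟩
  set vmin := (A.image g).min' hVne with hvmin
  -- the objective-value set equals the finite image
  have hSset : {v : ℝ | ∃ x : ℕ → ℝ, leaderFeas kl L l x ∧ v = psi n kf F f β x}
      = ↑(A.image g) := by
    ext v
    simp only [Set.mem_setOf_eq, Finset.coe_image, Set.mem_image, Finset.mem_coe]
    constructor
    · rintro ⟨x, hxfeas, rfl⟩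
      set Sx := (Finset.Icc 1 n).filter (fun i => x i = 1) with hSx
      have hxle : ∀ i, x i ≤ 1 := by
        intro i; rcases hxfeas.1 i with h | h <;> simp [h]
      have hagree : ∀ i ∈ Finset.Icc 1 n, x i = chi Sx i := by
        intro i hi
        rcases hxfeas.1 i with h | h <;>
          simp [chi, hSx, Finset.mem_filter, hi, h]
      refine ⟨Sx, ?_, ?_⟩
      · rw [hAmem]
        refine ⟨Finset.filter_subset _ _, chi01 _, fun kk => ?_⟩
        rw [Finset.sum_congr rfl (fun i hi => (hagree i (hLsub kk hi)).symm)]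
        exact hxfeas.2 kk
      · exact (psi_eq_of_agree n kf F f β hFsub x (chi Sx) hxle (chile Sx) hagree).symm
    · rintro ⟨S, hS, rfl⟩
      exact ⟨chi S, ((hAmem S).1 hS).2, rfl⟩
  have hsInf : sInf {v : ℝ | ∃ x : ℕ → ℝ, leaderFeas kl L l x ∧ v = psi n kf F f β x}
      = vmin := by
    rw [hSset]
    exact IsLeast.csInf_eq ⟨Finset.min'_mem _ hVne, fun v hv =>
      Finset.min'_le _ v hv⟩
  set B := A.filter (fun S => g S = vmin) with hB
  have hBne : B.Nonempty := by
    obtain ⟨S0, hS0A, hS0⟩ := Finset.mem_image.1 (Finset.min'_mem (A.image g) hVne)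
    exact ⟨S0, Finset.mem_filter.2 ⟨hS0A, hS0⟩⟩
  obtain ⟨Sstar, hSstarB, hmax⟩ := B.exists_max_image (fun S => ∑ i ∈ S, i) hBne
  have hSstarA : Sstar ∈ A := (Finset.mem_filter.1 hSstarB).1
  have hSstarVal : g Sstar = vmin := (Finset.mem_filter.1 hSstarB).2
  have hSstarSub : Sstar ⊆ Finset.Icc 1 n := ((hAmem Sstar).1 hSstarA).1
  have hSstarFeas : leaderFeas kl L l (chi Sstar) := ((hAmem Sstar).1 hSstarA).2
  refine ⟨chi Sstar, hSstarFeas, by rw [hsInf]; exact hSstarVal, ?_⟩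
  intro k k' a b haF haL hbF hbL hab
  by_cases hbS : b ∈ Sstar
  · rw [show chi Sstar b = 1 by simp [chi, hbS]]
    exact chile Sstar a
  by_cases haS : a ∈ Sstar
  · exfalso
    set S' := insert b (Sstar.erase a) with hS'
    have haI : a ∈ Finset.Icc 1 n := hFsub k haF
    have hbI : b ∈ Finset.Icc 1 n := hFsub k hbF
    have habne : a ≠ b := Nat.ne_of_lt hab
    have hβab : β a ≤ β b := hβmono a b hab.le (Finset.mem_Icc.1 hbI).2
    have hfeas' : leaderFeas kl L l (chi S') :=
      leaderFeas_exchange kl L l hLdisj Sstar a b habne k' haL hbL haS hbS hSstarFeas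
    have hS'sub : S' ⊆ Finset.Icc 1 n :=
      Finset.insert_subset hbI ((Finset.erase_subset _ _).trans hSstarSub)
    have hS'A : S' ∈ A := (hAmem S').2 ⟨hS'sub, hfeas'⟩
    have hle' : g S' ≤ vmin := by
      rw [← hSstarVal]
      exact psi_exchange n kf F f β hβnn hFdisj Sstar a b haI hbI habne hβab
        k haF hbF haS hbS
    have hge' : vmin ≤ g S' := Finset.min'_le _ _ (Finset.mem_image_of_mem g hS'A)
    have hS'B : S' ∈ B := Finset.mem_filter.2 ⟨hS'A, le_antisymm hle' hge'⟩
    have hpot := hmax S' hS'B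
    have hbnotin : b ∉ Sstar.erase a := fun h => hbS (Finset.mem_of_mem_erase h)
    have h1 : ∑ i ∈ S', i = b + ∑ i ∈ Sstar.erase a, i := Finset.sum_insert hbnotin
    have h2 : a + ∑ i ∈ Sstar.erase a, i = ∑ i ∈ Sstar, i :=
      Finset.add_sum_erase _ (fun i => i) haS
    omega
  · rw [show chi Sstar a = 0 by simp [chi, haS]]
    exact chi_nonneg Sstar b
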